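/- Let G be a sub-σ-field of F and (X_n) E-valued F-measurable random variables taking values in a metric space E. Suppose there exist, on an extension (Ω̂,F̂,P̂), random variables (X_n^m)_{n,m} (F-measurable), (X^m)_m and X (F̂-measurable) such that: (a) for every ε>0, lim_{m→∞} limsup_{n→∞} P(d(X_n, X_n^m) > ε) = 0; (b) for each m, E[f(X_n^m)Y] → Ê[f(X^m)Y] for all bounded continuous f and bounded G-measurable Y; (c) for every ε>0, lim_{m→∞} P̂(d(X^m, X) > ε) = 0. Then X_n converges G-stably in law to X, i.e. E[f(X_n)Y] → Ê[f(X)Y] for all bounded continuous f and bounded G-measurable Y. -/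

import Mathlib

open MeasureTheory ProbabilityTheory Filter Real Set Topology

noncomputable section

/-- The discretization map of the regular partition with mesh `1/n`. -/
def eta (n : ℕ) (t : ℝ) : ℝ := (⌊t * n⌋ : ℝ) / n

/-- A real-valued standard Brownian motion with respect to a filtration `F`. -/
structure IsBM {Ω : Type*} [MeasurableSpace Ω] (P : Measure Ω)
    (F : ℝ → MeasurableSpace Ω) (W : ℝ → Ω → ℝ) : Prop where
  adapted : ∀ t : ℝ, Measurable[F t] (W t)
  cont : ∀ ω, Continuous fun t => W t ω
  init : ∀ ω, W 0 ω = 0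
  gauss : ∀ s t : ℝ, 0 ≤ s → s ≤ t →
    P.map (fun ω => W t ω - W s ω) = gaussianReal 0 (Real.toNNReal (t - s))
  indep : ∀ s t : ℝ, 0 ≤ s → s ≤ t →
    Indep (MeasurableSpace.comap (fun ω => W t ω - W s ω) inferInstance) (F s) P

/-- An abstract Itô-type stochastic integral operator `si f a b = ∫_a^b f_s dV_s`
with respect to an integrator `V` and a filtration `F`. -/
structure SIop (Ω : Type*) [MeasurableSpace Ω] (P : Measure Ω)
    (F : ℝ → MeasurableSpace Ω) (V : ℝ → Ω → ℝ) where
  si : (ℝ → Ω → ℝ) → ℝ → ℝ → Ω → ℝ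
  si_meas : ∀ f a b, Measurable (si f a b)
  si_add : ∀ f (a b c : ℝ), a ≤ b → b ≤ c →
    ∀ᵐ ω ∂P, si f a c ω = si f a b ω + si f b c ω
  si_const : ∀ (ξ : Ω → ℝ) (a b : ℝ), Measurable[F a] ξ →
    ∀ᵐ ω ∂P, si (fun _ => ξ) a b ω = ξ ω * (V b ω - V a ω)
  si_linear : ∀ f g (a b : ℝ), ∀ᵐ ω ∂P,
    si (fun s ω => f s ω + g s ω) a b ω = si f a b ω + si g a b ω

/-- The predictable σ-field on `ℝ × Ω` associated with the filtration `F`. -/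
def predSigma {Ω : Type*} (F : ℝ → MeasurableSpace Ω) : MeasurableSpace (ℝ × Ω) :=
  MeasurableSpace.generateFrom
    {u | ∃ (s t : ℝ) (A : Set Ω), s < t ∧ MeasurableSet[F s] A ∧ u = Set.Ioc s t ×ˢ A}

/-- A process is predictable if it is measurable with respect to the predictable σ-field. -/
def Predictable {Ω : Type*} (F : ℝ → MeasurableSpace Ω) (f : ℝ → Ω → ℝ) : Prop :=
  Measurable[predSigma F] fun p => f p.1 p.2

/-- The natural filtration `σ(W_s : 0 ≤ s ≤ t)` of a single process. -/
def filtOf {Ω : Type*} (W : ℝ → Ω → ℝ) (t : ℝ) : MeasurableSpace Ω :=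
  ⨆ s ∈ Set.Icc (0:ℝ) t, MeasurableSpace.comap (W s) inferInstance

/-- The natural filtration generated by a family of processes. -/
def filtOfFam {Ω ι : Type*} (W : ι → ℝ → Ω → ℝ) (t : ℝ) : MeasurableSpace Ω :=
  ⨆ i, filtOf (W i) t

/-- `G`-stable convergence in law of `X n` to `Xl`, the latter defined on an
extension `Ω × Ω₀` of the original probability space. -/
def StableConvTo {Ω Ω₀ E : Type*} (G : MeasurableSpace Ω)
    [MeasurableSpace Ω] [MeasurableSpace Ω₀]
    [PseudoMetricSpace E] (P : Measure Ω)
    (X : ℕ → Ω → E) (Phat : Measure (Ω × Ω₀)) (Xl : Ω × Ω₀ → E) : Prop :=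
  ∀ f : E → ℝ, Continuous f → (∃ C, ∀ x, |f x| ≤ C) →
  ∀ Y : Ω → ℝ, Measurable[G] Y → (∃ C, ∀ ω, |Y ω| ≤ C) →
    Tendsto (fun n => ∫ ω, f (X n ω) * Y ω ∂P) atTop
      (𝓝 (∫ p, f (Xl p) * Y p.1 ∂Phat))




open scoped NNReal ENNReal

lemma key_bound {α E : Type*} [MeasurableSpace α] [MetricSpace E]
    {μ : Measure α} [IsProbabilityMeasure μ]
    {f : E → ℝ} {K : ℝ≥0} (hf : LipschitzWith K f) {C : ℝ} (hC : ∀ x, |f x| ≤ C)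
    {Y : α → ℝ} {D : ℝ} (hD : ∀ ω, |Y ω| ≤ D) (hD0 : 0 ≤ D) (hC0 : 0 ≤ C)
    {A B : α → E}
    (hmA : AEStronglyMeasurable (fun ω => f (A ω) * Y ω) μ)
    (hmB : AEStronglyMeasurable (fun ω => f (B ω) * Y ω) μ)
    {δ : ℝ} (hδ : 0 < δ) :
    |(∫ ω, f (A ω) * Y ω ∂μ) - ∫ ω, f (B ω) * Y ω ∂μ| ≤
      (K : ℝ) * δ * D + 2 * C * D * (μ {ω | δ < dist (A ω) (B ω)}).toReal := by
  have hintA : Integrable (fun ω => f (A ω) * Y ω) μ := by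
    refine ⟨hmA, HasFiniteIntegral.of_bounded (C := C * D) ?_⟩
    refine Eventually.of_forall fun ω => ?_
    rw [norm_mul]
    exact mul_le_mul (by simpa using hC (A ω)) (by simpa using hD ω) (norm_nonneg _) hC0
  have hintB : Integrable (fun ω => f (B ω) * Y ω) μ := by
    refine ⟨hmB, HasFiniteIntegral.of_bounded (C := C * D) ?_⟩
    refine Eventually.of_forall fun ω => ?_
    rw [norm_mul]
    exact mul_le_mul (by simpa using hC (B ω)) (by simpa using hD ω) (norm_nonneg _) hC0
  rw [← integral_sub hintA hintB]
  set g : α → ℝ := fun ω => f (A ω) * Y ω - f (B ω) * Y ω with hg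
  have h1 : |∫ ω, g ω ∂μ| ≤ ∫ ω, ‖g ω‖ ∂μ := by
    simpa [Real.norm_eq_abs] using norm_integral_le_integral_norm (f := g) (μ := μ)
  have hgint : Integrable g μ := hintA.sub hintB
  have h2 : ∫ ω, ‖g ω‖ ∂μ = (∫⁻ ω, ‖g ω‖₊ ∂μ).toReal := by
    exact integral_norm_eq_lintegral_enorm hgint.1
  set S : Set α := {ω | δ < dist (A ω) (B ω)} with hS
  have hpt : ∀ ω, (‖g ω‖₊ : ℝ≥0∞) ≤
      ENNReal.ofReal ((K : ℝ) * δ * D) + ENNReal.ofReal (2 * C * D) * S.indicator 1 ω := by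
    intro ω
    have hYD : |Y ω| ≤ D := hD ω
    by_cases hω : δ < dist (A ω) (B ω)
    · have hfb : |f (A ω) - f (B ω)| ≤ 2 * C := by
        calc |f (A ω) - f (B ω)| ≤ |f (A ω)| + |f (B ω)| := abs_sub _ _
        _ ≤ 2 * C := by linarith [hC (A ω), hC (B ω)]
      have : ‖g ω‖ ≤ 2 * C * D := by
        have : g ω = (f (A ω) - f (B ω)) * Y ω := by ring
        rw [this, norm_mul]
        exact mul_le_mul (by simpa using hfb) (by simpa using hYD) (norm_nonneg _)
          (by positivity)
      have hind : S.indicator (1 : α → ℝ≥0∞) ω = 1 := Set.indicator_of_mem hω 1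
      calc (‖g ω‖₊ : ℝ≥0∞) = ENNReal.ofReal ‖g ω‖ := (ofReal_norm _).symm
        _ ≤ ENNReal.ofReal (2 * C * D) := ENNReal.ofReal_le_ofReal this
        _ ≤ _ := by rw [hind, mul_one]; exact le_add_self
    · have hfb : |f (A ω) - f (B ω)| ≤ (K : ℝ) * δ := by
        have := hf.dist_le_mul (A ω) (B ω)
        rw [Real.dist_eq] at this
        refine this.trans ?_
        exact mul_le_mul_of_nonneg_left (not_lt.mp hω) K.2
      have : ‖g ω‖ ≤ (K : ℝ) * δ * D := by
        have hg' : g ω = (f (A ω) - f (B ω)) * Y ω := by ring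
        rw [hg', norm_mul]
        exact mul_le_mul (by simpa using hfb) (by simpa using hYD) (norm_nonneg _)
          (by positivity)
      calc (‖g ω‖₊ : ℝ≥0∞) = ENNReal.ofReal ‖g ω‖ := (ofReal_norm _).symm
        _ ≤ ENNReal.ofReal ((K : ℝ) * δ * D) := ENNReal.ofReal_le_ofReal this
        _ ≤ _ := le_self_add
  have h3 : (∫⁻ ω, ‖g ω‖₊ ∂μ) ≤
      ENNReal.ofReal ((K : ℝ) * δ * D) + ENNReal.ofReal (2 * C * D) * μ S := by
    calc (∫⁻ ω, ‖g ω‖₊ ∂μ)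
        ≤ ∫⁻ ω, (ENNReal.ofReal ((K : ℝ) * δ * D)
            + ENNReal.ofReal (2 * C * D) * S.indicator 1 ω) ∂μ := lintegral_mono hpt
      _ ≤ ENNReal.ofReal ((K : ℝ) * δ * D) + ENNReal.ofReal (2 * C * D) * μ S := by
          rw [lintegral_add_left measurable_const, lintegral_const_mul' _ _ ENNReal.ofReal_ne_top]
          gcongr
          · simp [measure_univ]
          · have := lintegral_indicator_const_le (μ := μ) S (1 : ℝ≥0∞)
            rw [one_mul] at this
            exact this
  have hfin : ENNReal.ofReal ((K : ℝ) * δ * D) + ENNReal.ofReal (2 * C * D) * μ S ≠ ⊤ := by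
    refine ENNReal.add_ne_top.mpr ⟨ENNReal.ofReal_ne_top, ?_⟩
    exact ENNReal.mul_ne_top ENNReal.ofReal_ne_top (measure_ne_top μ S)
  have h4 := ENNReal.toReal_mono hfin h3
  rw [ENNReal.toReal_add ENNReal.ofReal_ne_top
      (ENNReal.mul_ne_top ENNReal.ofReal_ne_top (measure_ne_top μ S)),
    ENNReal.toReal_mul, ENNReal.toReal_ofReal (by positivity),
    ENNReal.toReal_ofReal (by positivity)] at h4
  calc |∫ ω, g ω ∂μ| ≤ (∫⁻ ω, ‖g ω‖₊ ∂μ).toReal := h2 ▸ h1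
    _ ≤ _ := h4


section InfConv

variable {E : Type*} [MetricSpace E] [Nonempty E] {f : E → ℝ} {C : ℝ}

noncomputable def infConv (f : E → ℝ) (k : ℕ) (x : E) : ℝ :=
  ⨅ y, (f y + k * dist x y)

lemma infConv_bddBelow (hC : ∀ x, |f x| ≤ C) (k : ℕ) (x : E) :
    BddBelow (Set.range fun y => f y + k * dist x y) := by
  refine ⟨-C, fun z hz => ?_⟩
  obtain ⟨y, rfl⟩ := hz
  show -C ≤ f y + (k:ℝ) * dist x y
  have h1 : -C ≤ f y := neg_le_of_abs_le (hC y)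
  have h2 : (0:ℝ) ≤ k * dist x y := by positivity
  linarith

lemma infConv_le_self (hC : ∀ x, |f x| ≤ C) (k : ℕ) (x : E) :
    infConv f k x ≤ f x := by
  have := ciInf_le (infConv_bddBelow hC k x) x
  simpa [infConv] using this

lemma neg_le_infConv (hC : ∀ x, |f x| ≤ C) (k : ℕ) (x : E) :
    -C ≤ infConv f k x := by
  refine le_ciInf fun y => ?_
  show -C ≤ f y + (k:ℝ) * dist x y
  have h1 : -C ≤ f y := neg_le_of_abs_le (hC y)
  have h2 : (0:ℝ) ≤ k * dist x y := by positivity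
  linarith

lemma abs_infConv_le (hC : ∀ x, |f x| ≤ C) (k : ℕ) (x : E) :
    |infConv f k x| ≤ C := by
  rw [abs_le]
  exact ⟨neg_le_infConv hC k x, (infConv_le_self hC k x).trans ((abs_le.mp (hC x)).2)⟩

lemma infConv_lipschitz (hC : ∀ x, |f x| ≤ C) (k : ℕ) :
    LipschitzWith (k : ℝ≥0) (infConv f k) := by
  have key : ∀ x z : E, infConv f k x ≤ infConv f k z + k * dist x z := by
    intro x z
    have h1 : infConv f k x - k * dist x z ≤ infConv f k z := by
      refine le_ciInf fun y => ?_
      show infConv f k x - (k:ℝ) * dist x z ≤ f y + (k:ℝ) * dist z y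
      have h2 : infConv f k x ≤ f y + k * dist x y :=
        ciInf_le (infConv_bddBelow hC k x) y
      have h3 : dist x y ≤ dist x z + dist z y := dist_triangle x z y
      have h4 : (k:ℝ) * dist x y ≤ k * dist x z + k * dist z y := by
        rw [← mul_add]; exact mul_le_mul_of_nonneg_left h3 (by positivity)
      linarith
    linarith
  refine LipschitzWith.of_dist_le_mul fun x z => ?_
  rw [Real.dist_eq, abs_sub_le_iff]
  have h1 := key x z
  have h2 := key z x
  rw [dist_comm z x] at h2
  constructor
  · push_cast; linarith
  · push_cast; linarith

lemma infConv_tendsto (hf : Continuous f) (hC : ∀ x, |f x| ≤ C) (x : E) :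
    Tendsto (fun k => infConv f k x) atTop (𝓝 (f x)) := by
  rw [Metric.tendsto_atTop]
  intro ε hε
  obtain ⟨δ, hδ, hδ'⟩ := Metric.continuous_iff.mp hf x (ε/2) (by positivity)
  refine ⟨⌈(2*C)/δ⌉₊, fun k hk => ?_⟩
  have hC0 : 0 ≤ C := (abs_nonneg _).trans (hC x)
  have hkδ : (2*C)/δ ≤ (k:ℝ) := le_trans (Nat.le_ceil _) (by exact_mod_cast hk)
  have hlow : f x - ε/2 ≤ infConv f k x := by
    refine le_ciInf fun y => ?_
    show f x - ε/2 ≤ f y + (k:ℝ) * dist x y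
    by_cases hy : dist y x < δ
    · have := hδ' y hy
      rw [Real.dist_eq] at this
      have h1 : f x - ε/2 ≤ f y := by
        have := abs_lt.mp this
        linarith [this.1]
      have h2 : (0:ℝ) ≤ k * dist x y := by positivity
      linarith
    · push_neg at hy
      have h1 : -C ≤ f y := neg_le_of_abs_le (hC y)
      have h2 : (k:ℝ) * dist x y ≥ k * δ := by
        rw [dist_comm]
        exact mul_le_mul_of_nonneg_left hy (by positivity)
      have h3 : (k:ℝ) * δ ≥ 2 * C := by
        rw [ge_iff_le, ← div_le_iff₀ hδ] at *
        linarith [hkδ]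
      have h4 : f x ≤ C := (abs_le.mp (hC x)).2
      nlinarith [hε.le]
  have hup : infConv f k x ≤ f x := infConv_le_self hC k x
  rw [Real.dist_eq, abs_sub_lt_iff]
  constructor <;> linarith

end InfConv


lemma integrable_of_abs_bound {α : Type*} [MeasurableSpace α] {μ : Measure α}
    [IsFiniteMeasure μ] {u : α → ℝ} (hm : AEStronglyMeasurable u μ) {M : ℝ}
    (hb : ∀ a, |u a| ≤ M) : Integrable u μ :=
  ⟨hm, HasFiniteIntegral.of_bounded (C := M)
    (Eventually.of_forall (by simpa [Real.norm_eq_abs] using hb))⟩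

lemma abs_integral_le_of_abs_bound {α : Type*} [MeasurableSpace α] {μ : Measure α}
    [IsProbabilityMeasure μ] {u : α → ℝ} {M : ℝ} (hb : ∀ a, |u a| ≤ M) :
    |∫ a, u a ∂μ| ≤ M := by
  have := norm_integral_le_of_norm_le_const (μ := μ) (f := u) (C := M)
    (Eventually.of_forall (by simpa [Real.norm_eq_abs] using hb))
  simpa [Real.norm_eq_abs, measure_univ] using this

lemma tendsto_of_lip {α β E : Type*} [MeasurableSpace α] [MeasurableSpace β]
    [MetricSpace E] [MeasurableSpace E] [BorelSpace E] [Nonempty E]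
    {μ : Measure α} [IsProbabilityMeasure μ] {ν : Measure β} [IsProbabilityMeasure ν]
    {A : ℕ → α → E} (hA : ∀ n, Measurable (A n)) {B : β → E} (hB : Measurable B)
    {Y : α → ℝ} (hYm : Measurable Y) {Z : β → ℝ} (hZm : Measurable Z)
    (hY0 : ∀ ω, 0 ≤ Y ω) (hZ0 : ∀ b, 0 ≤ Z b) {D : ℝ}
    (hYD : ∀ ω, Y ω ≤ D) (hZD : ∀ b, Z b ≤ D)
    {f : E → ℝ} (hfc : Continuous f) {C : ℝ} (hC : ∀ x, |f x| ≤ C)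
    (hlip : ∀ (g : E → ℝ) (K : ℝ≥0), LipschitzWith K g → (∀ x, |g x| ≤ C) →
      Tendsto (fun n => ∫ ω, g (A n ω) * Y ω ∂μ) atTop (𝓝 (∫ b, g (B b) * Z b ∂ν))) :
    Tendsto (fun n => ∫ ω, f (A n ω) * Y ω ∂μ) atTop (𝓝 (∫ b, f (B b) * Z b ∂ν)) := by
  have hC0 : 0 ≤ C := (abs_nonneg _).trans (hC (Classical.arbitrary E))
  have hα : Nonempty α := by
    rcases isEmpty_or_nonempty α with h | h
    · exfalso
      have h1 : μ Set.univ = 1 := measure_univ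
      rw [Set.univ_eq_empty_iff.mpr h, measure_empty] at h1
      exact zero_ne_one h1
    · exact h
  have hD0 : 0 ≤ D := (hY0 (Classical.arbitrary α)).trans (hYD (Classical.arbitrary α))
  have hYD' : ∀ ω, |Y ω| ≤ D := fun ω => abs_le.mpr ⟨by linarith [hY0 ω], hYD ω⟩
  have hZD' : ∀ b, |Z b| ≤ D := fun b => abs_le.mpr ⟨by linarith [hZ0 b], hZD b⟩
  set v : ℕ → ℝ := fun n => ∫ ω, f (A n ω) * Y ω ∂μ with hv
  set L : ℝ := ∫ b, f (B b) * Z b ∂ν with hL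
  -- generic bounds
  have habs_mul : ∀ {g : E → ℝ}, (∀ x, |g x| ≤ C) → ∀ (x : E) (y : ℝ), |y| ≤ D →
      |g x * y| ≤ C * D := by
    intro g hg x y hy
    rw [abs_mul]
    exact mul_le_mul (hg x) hy (abs_nonneg _) hC0
  have hvb : ∀ n, |v n| ≤ C * D := fun n =>
    abs_integral_le_of_abs_bound (fun ω => habs_mul hC _ _ (hYD' ω))
  have hbelow : IsBoundedUnder (· ≥ ·) atTop v :=
    isBoundedUnder_of ⟨-(C * D), fun n => (abs_le.mp (hvb n)).1⟩
  have habove : IsBoundedUnder (· ≤ ·) atTop v :=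
    isBoundedUnder_of ⟨C * D, fun n => (abs_le.mp (hvb n)).2⟩
  have hmeasμ : ∀ (g : E → ℝ), Continuous g → ∀ n,
      AEStronglyMeasurable (fun ω => g (A n ω) * Y ω) μ :=
    fun g hg n => ((hg.measurable.comp (hA n)).mul hYm).aestronglyMeasurable
  have hmeasν : ∀ (g : E → ℝ), Continuous g →
      AEStronglyMeasurable (fun b => g (B b) * Z b) ν :=
    fun g hg => ((hg.measurable.comp hB).mul hZm).aestronglyMeasurable
  have hintμ : ∀ (g : E → ℝ), Continuous g → (∀ x, |g x| ≤ C) → ∀ n,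
      Integrable (fun ω => g (A n ω) * Y ω) μ :=
    fun g hg hgb n => integrable_of_abs_bound (hmeasμ g hg n)
      (fun ω => habs_mul hgb _ _ (hYD' ω))
  -- dominated convergence for a sequence of uniformly bounded approximations
  have hdom : ∀ (g : ℕ → E → ℝ), (∀ k, Continuous (g k)) → (∀ k x, |g k x| ≤ C) →
      (∀ x, Tendsto (fun k => g k x) atTop (𝓝 (f x))) →
      Tendsto (fun k => ∫ b, g k (B b) * Z b ∂ν) atTop (𝓝 L) := by
    intro g hgc hgb hgt
    refine tendsto_integral_of_dominated_convergence (bound := fun _ => C * D)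
      (fun k => hmeasν (g k) (hgc k)) (integrable_const _) ?_ ?_
    · exact fun k => Eventually.of_forall fun b => by
        rw [Real.norm_eq_abs]; exact habs_mul (hgb k) (B b) (Z b) (hZD' b)
    · exact Eventually.of_forall fun b => (hgt (B b)).mul_const _
  -- lower bound
  have hinf : L ≤ liminf v atTop := by
    set g : ℕ → E → ℝ := fun k => infConv f k with hg
    have step1 : ∀ k, (∫ b, g k (B b) * Z b ∂ν) ≤ liminf v atTop := by
      intro k
      have ht := hlip (g k) k (infConv_lipschitz hC k) (abs_infConv_le hC k)
      have hmono : ∀ n, (∫ ω, g k (A n ω) * Y ω ∂μ) ≤ v n := by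
        intro n
        refine integral_mono (hintμ (g k) (infConv_lipschitz hC k).continuous
          (abs_infConv_le hC k) n) (hintμ f hfc hC n) fun ω => ?_
        exact mul_le_mul_of_nonneg_right (infConv_le_self hC k _) (hY0 ω)
      have h1 : liminf (fun n => ∫ ω, g k (A n ω) * Y ω ∂μ) atTop ≤ liminf v atTop := by
        refine liminf_le_liminf (Eventually.of_forall hmono) ?_ ?_
        · exact isBoundedUnder_of ⟨-(C * D), fun n =>
            (abs_le.mp (abs_integral_le_of_abs_bound (fun ω =>
              habs_mul (abs_infConv_le hC k) _ _ (hYD' ω)))).1⟩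
        · exact habove.isCoboundedUnder_ge
      rw [← ht.liminf_eq]
      exact h1
    have step2 : Tendsto (fun k => ∫ b, g k (B b) * Z b ∂ν) atTop (𝓝 L) :=
      hdom g (fun k => (infConv_lipschitz hC k).continuous) (abs_infConv_le hC)
        (infConv_tendsto hfc hC)
    exact le_of_tendsto step2 (Eventually.of_forall step1)
  -- upper bound
  have hsup : limsup v atTop ≤ L := by
    have hCn : ∀ x, |(-f) x| ≤ C := fun x => by simpa using hC x
    set g : ℕ → E → ℝ := fun k x => -(infConv (fun z => -f z) k x) with hg
    have hgb : ∀ k x, |g k x| ≤ C := fun k x => by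
      simpa [hg, abs_neg] using abs_infConv_le (f := fun z => -f z) hCn k x
    have hglip : ∀ k : ℕ, LipschitzWith (k : ℝ≥0) (g k) := fun k =>
      (infConv_lipschitz (f := fun z => -f z) hCn k).neg
    have hgge : ∀ k x, f x ≤ g k x := fun k x => by
      have := infConv_le_self (f := fun z => -f z) hCn k x
      simp only [hg]
      linarith [this]
    have hgt : ∀ x, Tendsto (fun k => g k x) atTop (𝓝 (f x)) := fun x => by
      have := (infConv_tendsto (f := fun z => -f z) (hfc.neg) hCn x).neg
      simpa [hg] using this
    have step1 : ∀ k, limsup v atTop ≤ ∫ b, g k (B b) * Z b ∂ν := by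
      intro k
      have ht := hlip (g k) k (hglip k) (hgb k)
      have hmono : ∀ n, v n ≤ ∫ ω, g k (A n ω) * Y ω ∂μ := by
        intro n
        refine integral_mono (hintμ f hfc hC n)
          (hintμ (g k) (hglip k).continuous (hgb k) n) fun ω => ?_
        exact mul_le_mul_of_nonneg_right (hgge k _) (hY0 ω)
      have h1 : limsup v atTop ≤ limsup (fun n => ∫ ω, g k (A n ω) * Y ω ∂μ) atTop := by
        refine limsup_le_limsup (Eventually.of_forall hmono) ?_ ?_
        · exact hbelow.isCoboundedUnder_le
        · exact isBoundedUnder_of ⟨C * D, fun n =>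
            (abs_le.mp (abs_integral_le_of_abs_bound (fun ω =>
              habs_mul (hgb k) _ _ (hYD' ω)))).2⟩
      rw [← ht.limsup_eq]
      exact h1
    have step2 : Tendsto (fun k => ∫ b, g k (B b) * Z b ∂ν) atTop (𝓝 L) :=
      hdom g (fun k => (hglip k).continuous) hgb hgt
    exact ge_of_tendsto step2 (Eventually.of_forall step1)
  exact tendsto_of_le_liminf_of_limsup_le hinf hsup habove hbelow


lemma lip_case {Ω Ω₀ E : Type*} (G : MeasurableSpace Ω)
    [mΩ : MeasurableSpace Ω] [MeasurableSpace Ω₀]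
    [MetricSpace E] [MeasurableSpace E] [BorelSpace E]
    (P : Measure Ω) [IsProbabilityMeasure P]
    (Phat : Measure (Ω × Ω₀)) [IsProbabilityMeasure Phat]
    (hG : G ≤ mΩ)
    (X : ℕ → Ω → E) (hX : ∀ n, Measurable (X n))
    (Xm : ℕ → ℕ → Ω → E) (hXm : ∀ n m, Measurable (Xm n m))
    (Xlm : ℕ → Ω × Ω₀ → E) (hXlm : ∀ m, Measurable (Xlm m))
    (Xl : Ω × Ω₀ → E) (hXl : Measurable Xl)
    (ha : ∀ ε : ℝ, 0 < ε →
      Tendsto (fun m =>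
        Filter.limsup (fun n => (P {ω | ε < dist (X n ω) (Xm n m ω)}).toReal) atTop)
        atTop (𝓝 0))
    (hb : ∀ m, @StableConvTo Ω Ω₀ E G mΩ _ _ P (fun n => Xm n m) Phat (Xlm m))
    (hc : ∀ ε : ℝ, 0 < ε →
      Tendsto (fun m => (Phat {p | ε < dist (Xlm m p) (Xl p)}).toReal) atTop (𝓝 0))
    (f : E → ℝ) (K : ℝ≥0) (hf : LipschitzWith K f)
    {C : ℝ} (hC : ∀ x, |f x| ≤ C) (hC0 : 0 ≤ C)
    (Y : Ω → ℝ) (hY : Measurable[G] Y)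
    {D : ℝ} (hD : ∀ ω, |Y ω| ≤ D) (hD0 : 0 ≤ D) :
    Tendsto (fun n => ∫ ω, f (X n ω) * Y ω ∂P) atTop
      (𝓝 (∫ p, f (Xl p) * Y p.1 ∂Phat)) := by
  have hYm : Measurable Y := hY.mono hG le_rfl
  have hYfst : Measurable (fun p : Ω × Ω₀ => Y p.1) := hYm.comp measurable_fst
  have hfc : Continuous f := hf.continuous
  have hmX : ∀ n, AEStronglyMeasurable (fun ω => f (X n ω) * Y ω) P :=
    fun n => ((hfc.measurable.comp (hX n)).mul hYm).aestronglyMeasurable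
  have hmXm : ∀ n m, AEStronglyMeasurable (fun ω => f (Xm n m ω) * Y ω) P :=
    fun n m => ((hfc.measurable.comp (hXm n m)).mul hYm).aestronglyMeasurable
  have hmXlm : ∀ m, AEStronglyMeasurable (fun p => f (Xlm m p) * Y p.1) Phat :=
    fun m => ((hfc.measurable.comp (hXlm m)).mul hYfst).aestronglyMeasurable
  have hmXl : AEStronglyMeasurable (fun p => f (Xl p) * Y p.1) Phat :=
    ((hfc.measurable.comp hXl).mul hYfst).aestronglyMeasurable
  rw [Metric.tendsto_atTop]
  intro ε hε
  set Kr : ℝ := (K : ℝ) with hKr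
  have hKr0 : 0 ≤ Kr := K.2
  set q : ℝ := Kr * D with hq
  have hq0 : 0 ≤ q := mul_nonneg hKr0 hD0
  set r : ℝ := 2 * C * D with hr
  have hr0 : 0 ≤ r := by positivity
  set δ : ℝ := ε / (8 * (q + 1)) with hδdef
  have hδ : 0 < δ := by positivity
  set ε₁ : ℝ := ε / (8 * (r + 1)) with hε₁def
  have hε₁ : 0 < ε₁ := by positivity
  have hqδ : Kr * δ * D ≤ ε / 8 := by
    have h1 : δ * (q + 1) = ε / 8 := by
      rw [hδdef]; field_simp
    have h2 : Kr * δ * D = q * δ := by rw [hq]; ring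
    rw [h2, ← h1]
    have : q * δ ≤ (q + 1) * δ := by nlinarith
    linarith [this]
  have hrε₁ : r * ε₁ ≤ ε / 8 := by
    have h1 : ε₁ * (r + 1) = ε / 8 := by
      rw [hε₁def]; field_simp
    nlinarith
  -- choose m
  have hev1 : ∀ᶠ m in atTop,
      limsup (fun n => (P {ω | δ < dist (X n ω) (Xm n m ω)}).toReal) atTop < ε₁ :=
    (ha δ hδ).eventually_mem (Iio_mem_nhds hε₁) |>.mono (fun m hm => hm)
  have hev2 : ∀ᶠ m in atTop,
      (Phat {p | δ < dist (Xlm m p) (Xl p)}).toReal < ε₁ :=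
    (hc δ hδ).eventually_mem (Iio_mem_nhds hε₁) |>.mono (fun m hm => hm)
  obtain ⟨m, hm1, hm2⟩ := (hev1.and hev2).exists
  have hbd : IsBoundedUnder (· ≤ ·) atTop
      (fun n => (P {ω | δ < dist (X n ω) (Xm n m ω)}).toReal) := by
    refine isBoundedUnder_of ⟨1, fun n => ?_⟩
    simpa using ENNReal.toReal_mono (by simp) (prob_le_one (μ := P))
  have hev3 : ∀ᶠ n in atTop,
      (P {ω | δ < dist (X n ω) (Xm n m ω)}).toReal < ε₁ :=
    eventually_lt_of_limsup_lt hm1 hbd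
  have hbm := hb m f hfc ⟨C, hC⟩ Y hY ⟨D, hD⟩
  have hev4 : ∀ᶠ n in atTop,
      dist (∫ ω, f (Xm n m ω) * Y ω ∂P) (∫ p, f (Xlm m p) * Y p.1 ∂Phat) < ε / 4 :=
    hbm.eventually_mem (Metric.ball_mem_nhds _ (by positivity))
  obtain ⟨N, hN⟩ := eventually_atTop.mp (hev3.and hev4)
  refine ⟨N, fun n hn => ?_⟩
  obtain ⟨h3, h4⟩ := hN n hn
  have T1 : |(∫ ω, f (X n ω) * Y ω ∂P) - ∫ ω, f (Xm n m ω) * Y ω ∂P| ≤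
      Kr * δ * D + r * (P {ω | δ < dist (X n ω) (Xm n m ω)}).toReal :=
    key_bound hf hC hD hD0 hC0 (hmX n) (hmXm n m) hδ
  have T3 : |(∫ p, f (Xlm m p) * Y p.1 ∂Phat) - ∫ p, f (Xl p) * Y p.1 ∂Phat| ≤
      Kr * δ * D + r * (Phat {p | δ < dist (Xlm m p) (Xl p)}).toReal :=
    key_bound hf hC (fun (p : Ω × Ω₀) => hD p.1) hD0 hC0 (hmXlm m) hmXl hδ
  have hT1' : r * (P {ω | δ < dist (X n ω) (Xm n m ω)}).toReal ≤ r * ε₁ :=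
    mul_le_mul_of_nonneg_left h3.le hr0
  have hT3' : r * (Phat {p | δ < dist (Xlm m p) (Xl p)}).toReal ≤ r * ε₁ :=
    mul_le_mul_of_nonneg_left hm2.le hr0
  rw [Real.dist_eq]
  rw [Real.dist_eq] at h4
  have tri : |(∫ ω, f (X n ω) * Y ω ∂P) - ∫ p, f (Xl p) * Y p.1 ∂Phat| ≤
      |(∫ ω, f (X n ω) * Y ω ∂P) - ∫ ω, f (Xm n m ω) * Y ω ∂P|
      + |(∫ ω, f (Xm n m ω) * Y ω ∂P) - ∫ p, f (Xlm m p) * Y p.1 ∂Phat|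
      + |(∫ p, f (Xlm m p) * Y p.1 ∂Phat) - ∫ p, f (Xl p) * Y p.1 ∂Phat| := by
    have := abs_sub_le (∫ ω, f (X n ω) * Y ω ∂P) (∫ ω, f (Xm n m ω) * Y ω ∂P)
      (∫ p, f (Xl p) * Y p.1 ∂Phat)
    have h2 := abs_sub_le (∫ ω, f (Xm n m ω) * Y ω ∂P) (∫ p, f (Xlm m p) * Y p.1 ∂Phat)
      (∫ p, f (Xl p) * Y p.1 ∂Phat)
    linarith
  linarith


/-- Lemma 2.3: an approximation criterion for `G`-stable convergence in law. -/
theorem stmt1 {Ω Ω₀ E : Type*} (G : MeasurableSpace Ω)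
    [mΩ : MeasurableSpace Ω] [MeasurableSpace Ω₀]
    [MetricSpace E] [MeasurableSpace E] [BorelSpace E]
    (P : Measure Ω) [IsProbabilityMeasure P]
    (Phat : Measure (Ω × Ω₀)) [IsProbabilityMeasure Phat]
    (hext : Phat.map Prod.fst = P)
    (hG : G ≤ mΩ)
    (X : ℕ → Ω → E) (hX : ∀ n, Measurable (X n))
    (Xm : ℕ → ℕ → Ω → E) (hXm : ∀ n m, Measurable (Xm n m))
    (Xlm : ℕ → Ω × Ω₀ → E) (hXlm : ∀ m, Measurable (Xlm m))
    (Xl : Ω × Ω₀ → E) (hXl : Measurable Xl)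
    (ha : ∀ ε : ℝ, 0 < ε →
      Tendsto (fun m =>
        Filter.limsup (fun n => (P {ω | ε < dist (X n ω) (Xm n m ω)}).toReal) atTop)
        atTop (𝓝 0))
    (hb : ∀ m, @StableConvTo Ω Ω₀ E G mΩ _ _ P (fun n => Xm n m) Phat (Xlm m))
    (hc : ∀ ε : ℝ, 0 < ε →
      Tendsto (fun m => (Phat {p | ε < dist (Xlm m p) (Xl p)}).toReal) atTop (𝓝 0)) :
    @StableConvTo Ω Ω₀ E G mΩ _ _ P X Phat Xl := by
  intro f hfc ⟨C, hC⟩ Y hY ⟨D, hD⟩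
  have hΩ : Nonempty Ω := by
    rcases isEmpty_or_nonempty Ω with h | h
    · exfalso
      have h1 : P Set.univ = 1 := measure_univ
      rw [Set.univ_eq_empty_iff.mpr h, measure_empty] at h1
      exact zero_ne_one h1
    · exact h
  have hE : Nonempty E := ⟨X 0 (Classical.arbitrary Ω)⟩
  have hC0 : 0 ≤ C := (abs_nonneg _).trans (hC (Classical.arbitrary E))
  have hD0 : 0 ≤ D := (abs_nonneg _).trans (hD (Classical.arbitrary Ω))
  have hYm : Measurable Y := hY.mono hG le_rfl
  -- the positive part `Y + D` and the constant `D`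
  set Y₁ : Ω → ℝ := fun ω => Y ω + D with hY₁
  have hY₁G : Measurable[G] Y₁ := hY.add measurable_const
  have hY₁0 : ∀ ω, 0 ≤ Y₁ ω := fun ω => by
    have := (abs_le.mp (hD ω)).1; simp only [hY₁]; linarith
  have hY₁D : ∀ ω, Y₁ ω ≤ 2 * D := fun ω => by
    have := (abs_le.mp (hD ω)).2; simp only [hY₁]; linarith
  have hY₁abs : ∀ ω, |Y₁ ω| ≤ 2 * D := fun ω => abs_le.mpr ⟨by linarith [hY₁0 ω, hD0], hY₁D ω⟩
  have hY₁m : Measurable Y₁ := hY₁G.mono hG le_rfl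
  have ht1 : Tendsto (fun n => ∫ ω, f (X n ω) * Y₁ ω ∂P) atTop
      (𝓝 (∫ p, f (Xl p) * Y₁ p.1 ∂Phat)) := by
    refine tendsto_of_lip hX hXl hY₁m (hY₁m.comp measurable_fst) hY₁0
      (fun p => hY₁0 p.1) hY₁D (fun p => hY₁D p.1) hfc hC ?_
    intro g K hK hgb
    exact lip_case G P Phat hG X hX Xm hXm Xlm hXlm Xl hXl ha hb hc g K hK hgb hC0
      Y₁ hY₁G hY₁abs (by positivity)
  have ht2 : Tendsto (fun n => ∫ ω, f (X n ω) * D ∂P) atTop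
      (𝓝 (∫ p, f (Xl p) * D ∂Phat)) := by
    exact tendsto_of_lip (Y := fun _ => D) (Z := fun _ => D) hX hXl measurable_const
      measurable_const (fun _ => hD0) (fun _ => hD0) (fun _ => le_refl D)
      (fun _ => le_refl D) hfc hC
      (fun g K hK hgb => lip_case G P Phat hG X hX Xm hXm Xlm hXlm Xl hXl ha hb hc g K hK
        hgb hC0 (fun _ => D) measurable_const (D := D) (fun _ => abs_le.mpr ⟨by linarith, le_refl D⟩) hD0)
  have hDabs : |D| ≤ 2 * D := abs_le.mpr ⟨by linarith, by linarith⟩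
  have hintP : ∀ n (W : Ω → ℝ), Measurable W → (∀ ω, |W ω| ≤ 2 * D) →
      Integrable (fun ω => f (X n ω) * W ω) P := by
    intro n W hW hWb
    refine integrable_of_abs_bound
      ((hfc.measurable.comp (hX n)).mul hW).aestronglyMeasurable (M := C * (2 * D)) ?_
    intro ω
    rw [abs_mul]
    exact mul_le_mul (hC _) (hWb ω) (abs_nonneg _) hC0
  have hintQ : ∀ (W : Ω × Ω₀ → ℝ), Measurable W → (∀ p, |W p| ≤ 2 * D) →
      Integrable (fun p => f (Xl p) * W p) Phat := by
    intro W hW hWb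
    refine integrable_of_abs_bound
      ((hfc.measurable.comp hXl).mul hW).aestronglyMeasurable (M := C * (2 * D)) ?_
    intro p
    rw [abs_mul]
    exact mul_le_mul (hC _) (hWb p) (abs_nonneg _) hC0
  have heq : ∀ n, (∫ ω, f (X n ω) * Y ω ∂P)
      = (∫ ω, f (X n ω) * Y₁ ω ∂P) - ∫ ω, f (X n ω) * D ∂P := by
    intro n
    have h1 : Integrable (fun ω => f (X n ω) * Y₁ ω) P := hintP n Y₁ hY₁m hY₁abs
    have h2 : Integrable (fun ω => f (X n ω) * D) P :=
      hintP n (fun _ => D) measurable_const fun _ => hDabs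
    rw [← integral_sub h1 h2]
    refine integral_congr_ae (Eventually.of_forall fun ω => ?_)
    simp only [hY₁]
    ring
  have heqL : (∫ p, f (Xl p) * Y p.1 ∂Phat)
      = (∫ p, f (Xl p) * Y₁ p.1 ∂Phat) - ∫ p, f (Xl p) * D ∂Phat := by
    have h1 : Integrable (fun p => f (Xl p) * Y₁ p.1) Phat :=
      hintQ (fun p => Y₁ p.1) (hY₁m.comp measurable_fst) fun p => hY₁abs p.1
    have h2 : Integrable (fun p => f (Xl p) * D) Phat :=
      hintQ (fun _ => D) measurable_const fun _ => hDabs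
    rw [← integral_sub h1 h2]
    refine integral_congr_ae (Eventually.of_forall fun p => ?_)
    simp only [hY₁]
    ring
  have final := ht1.sub ht2
  rw [show (fun n => ∫ ω, f (X n ω) * Y ω ∂P)
      = fun n => (∫ ω, f (X n ω) * Y₁ ω ∂P) - ∫ ω, f (X n ω) * D ∂P from funext heq, heqL]
  exact final
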